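/- arXiv:0807.1429 — 2 statements merged into one kernel-verified Lean document; each statement's English description precedes it below -/
import Mathlib

section
/- For every integer n ≥ 2, one has sqrt(2(n^3 - n)/π) · 4/(n+2)^2 · ((n-2)/(n+2))^((n-2)/2) ≤ sqrt(32/(π(n+2))). In particular this quantity tends to 0 as n → ∞. -/
open Filter

/-- For every integer `n ≥ 2`,
`√(2(n³-n)/π) * 4/(n+2)² * ((n-2)/(n+2))^((n-2)/2) ≤ √(32/(π(n+2)))`,
and this quantity tends to `0` as `n → ∞`. -/
theorem stmt_1 :
    (∀ n : ℕ, 2 ≤ n →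
      Real.sqrt (2 * ((n : ℝ) ^ 3 - n) / Real.pi) * (4 / ((n : ℝ) + 2) ^ 2) *
          (((n : ℝ) - 2) / ((n : ℝ) + 2)) ^ (((n : ℝ) - 2) / 2) ≤
        Real.sqrt (32 / (Real.pi * ((n : ℝ) + 2)))) ∧
    Tendsto (fun n : ℕ =>
      Real.sqrt (2 * ((n : ℝ) ^ 3 - n) / Real.pi) * (4 / ((n : ℝ) + 2) ^ 2) *
        (((n : ℝ) - 2) / ((n : ℝ) + 2)) ^ (((n : ℝ) - 2) / 2)) atTop (nhds 0) := by
  have hpi := Real.pi_pos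
  have key : ∀ n : ℕ, 2 ≤ n →
      Real.sqrt (2 * ((n : ℝ) ^ 3 - n) / Real.pi) * (4 / ((n : ℝ) + 2) ^ 2) *
          (((n : ℝ) - 2) / ((n : ℝ) + 2)) ^ (((n : ℝ) - 2) / 2) ≤
        Real.sqrt (32 / (Real.pi * ((n : ℝ) + 2))) := by
    intro n hn
    have hn2 : (2:ℝ) ≤ (n:ℝ) := by exact_mod_cast hn
    have h1 : (0:ℝ) < (n:ℝ) + 2 := by linarith
    have hb0 : 0 ≤ ((n:ℝ) - 2) / ((n:ℝ) + 2) := div_nonneg (by linarith) h1.le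
    have hb1 : ((n:ℝ) - 2) / ((n:ℝ) + 2) ≤ 1 := by
      rw [div_le_one h1]; linarith
    have hB : (((n:ℝ) - 2) / ((n:ℝ) + 2)) ^ (((n : ℝ) - 2) / 2) ≤ 1 :=
      Real.rpow_le_one hb0 hb1 (div_nonneg (by linarith) (by norm_num))
    have hA : Real.sqrt (2 * ((n : ℝ) ^ 3 - n) / Real.pi) * (4 / ((n : ℝ) + 2) ^ 2) ≤
        Real.sqrt (32 / (Real.pi * ((n : ℝ) + 2))) := by
      have hc : (0:ℝ) ≤ 4 / ((n:ℝ) + 2) ^ 2 := by positivity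
      rw [show (4 / ((n:ℝ) + 2) ^ 2) = Real.sqrt ((4 / ((n:ℝ) + 2) ^ 2) ^ 2) from
        (Real.sqrt_sq hc).symm, ← Real.sqrt_mul (div_nonneg (by nlinarith [pow_le_pow_left₀ (by linarith : (0:ℝ) ≤ 2) hn2 3]) hpi.le)]
      apply Real.sqrt_le_sqrt
      rw [div_pow, div_mul_div_comm, div_le_div_iff₀ (by positivity) (by positivity)]
      have hpoly : ((n:ℝ) ^ 3 - n) * ((n:ℝ) + 2) ≤ (((n:ℝ) + 2) ^ 2) ^ 2 := by
        nlinarith [sq_nonneg ((n:ℝ)), sq_nonneg ((n:ℝ)+2)]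
      nlinarith [mul_le_mul_of_nonneg_left hpoly hpi.le]
    calc Real.sqrt (2 * ((n : ℝ) ^ 3 - n) / Real.pi) * (4 / ((n : ℝ) + 2) ^ 2) *
          (((n : ℝ) - 2) / ((n : ℝ) + 2)) ^ (((n : ℝ) - 2) / 2)
        ≤ Real.sqrt (2 * ((n : ℝ) ^ 3 - n) / Real.pi) * (4 / ((n : ℝ) + 2) ^ 2) * 1 := by
          apply mul_le_mul_of_nonneg_left hB
          exact mul_nonneg (Real.sqrt_nonneg _) (by positivity)
      _ = Real.sqrt (2 * ((n : ℝ) ^ 3 - n) / Real.pi) * (4 / ((n : ℝ) + 2) ^ 2) := by ring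
      _ ≤ Real.sqrt (32 / (Real.pi * ((n : ℝ) + 2))) := hA
  refine ⟨key, ?_⟩
  have h0 : Tendsto (fun n : ℕ => Real.sqrt (32 / (Real.pi * ((n : ℝ) + 2)))) atTop (nhds 0) := by
    have ht : Tendsto (fun n : ℕ => 32 / (Real.pi * ((n : ℝ) + 2))) atTop (nhds 0) := by
      apply Tendsto.div_atTop tendsto_const_nhds
      exact Tendsto.const_mul_atTop hpi
        (tendsto_atTop_add_const_right _ _ tendsto_natCast_atTop_atTop)
    have h2 : Tendsto (fun n : ℕ => Real.sqrt (32 / (Real.pi * ((n : ℝ) + 2)))) atTop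
        (nhds (Real.sqrt 0)) := (Real.continuous_sqrt.tendsto 0).comp ht
    rwa [Real.sqrt_zero] at h2
  apply tendsto_of_tendsto_of_tendsto_of_le_of_le' tendsto_const_nhds h0
  · filter_upwards [eventually_ge_atTop 2] with n hn
    have hn2 : (2:ℝ) ≤ (n:ℝ) := by exact_mod_cast hn
    have h1 : (0:ℝ) < (n:ℝ) + 2 := by linarith
    have hb0 : 0 ≤ ((n:ℝ) - 2) / ((n:ℝ) + 2) := div_nonneg (by linarith) h1.le
    exact mul_nonneg (mul_nonneg (Real.sqrt_nonneg _) (by positivity))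
      (Real.rpow_nonneg hb0 _)
  · filter_upwards [eventually_ge_atTop 2] with n hn
    exact key n hn
end

section
/- Let q be a holomorphic function on the unit disc 𝔻 with Taylor expansion q(z) = Σ_{n≥2} (n^3 - n) a_n z^{n-2}. Then for any R ∈ (0,1), ∫∫_{|z|<R} |q(z)|^2 (1-|z|^2)^2/4 d²z ≥ (4π/3) |3 a_2/2|^2 (1 - (1 - R^2)^3). -/
open MeasureTheory Metric

noncomputable def sw (z : ℂ) : ℝ := (1 - ‖z‖ ^ 2) ^ 2 / 4

lemma sw_nonneg (z : ℂ) : 0 ≤ sw z := by unfold sw; positivity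

lemma sw_cont : Continuous sw := by unfold sw; fun_prop

lemma sw_le {z : ℂ} (hz : ‖z‖ ≤ 1) : sw z ≤ 1/4 := by
  have h0 : 0 ≤ 1 - ‖z‖ ^ 2 := by nlinarith [norm_nonneg z]
  have h1 : 1 - ‖z‖ ^ 2 ≤ 1 := by nlinarith [norm_nonneg z]
  unfold sw; nlinarith

-- rotation lemma
lemma rot_int (R : ℝ) (n : ℕ) (hn : n ≠ 0) :
    ∫ z in ball (0:ℂ) R, (z ^ n * (sw z : ℂ)) = 0 := by
  set ω : Circle := Circle.exp (Real.pi / n) with hω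
  have hmp : MeasurePreserving (rotation ω) := (rotation ω).measurePreserving
  have hemb : MeasurableEmbedding (rotation ω) :=
    (rotation ω).toHomeomorph.measurableEmbedding
  have hpre : (rotation ω) ⁻¹' (ball (0:ℂ) R) = ball 0 R := by
    ext z
    simp only [Set.mem_preimage, mem_ball_zero_iff, rotation_apply, norm_mul]
    rw [show ‖(ω : ℂ)‖ = 1 from Circle.norm_coe ω, one_mul]
  have key := hmp.setIntegral_preimage_emb hemb
    (fun z => z ^ n * (sw z : ℂ)) (ball (0:ℂ) R)
  rw [hpre] at key
  have hωn : ((ω : ℂ)) ^ n = -1 := by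
    rw [hω, Circle.coe_exp, ← Complex.exp_nat_mul]
    rw [show (n : ℂ) * (↑(Real.pi / n) * Complex.I) = Real.pi * Complex.I by
      push_cast
      have : (n:ℂ) ≠ 0 := Nat.cast_ne_zero.mpr hn
      field_simp]
    exact Complex.exp_pi_mul_I
  have hptw : ∀ z : ℂ, (rotation ω z) ^ n * (sw (rotation ω z) : ℂ)
      = -(z ^ n * (sw z : ℂ)) := by
    intro z
    rw [rotation_apply]
    have hwz : sw ((ω : ℂ) * z) = sw z := by
      unfold sw
      rw [norm_mul, show ‖(ω : ℂ)‖ = 1 from Circle.norm_coe ω, one_mul]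
    rw [hwz, mul_pow, hωn]; ring
  simp_rw [hptw] at key
  rw [integral_neg] at key
  linear_combination (-1/2 : ℂ) * key

lemma ball_int_sw {R : ℝ} (hR : 0 < R) :
    ∫ z in ball (0:ℂ) R, sw z = Real.pi / 12 * (1 - (1 - R ^ 2) ^ 3) := by
  set g : ℝ → ℝ := (Set.Iio R).indicator (fun r => (1 - r ^ 2) ^ 2 / 4) with hg
  have h1 : ∫ z in ball (0:ℂ) R, sw z = ∫ z : ℂ, g ‖z‖ := by
    rw [← integral_indicator measurableSet_ball]
    congr 1; funext z
    by_cases hz : z ∈ ball (0:ℂ) R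
    · rw [Set.indicator_of_mem hz, hg,
        Set.indicator_of_mem (by simpa [mem_ball_zero_iff] using hz)]
      rfl
    · rw [Set.indicator_of_notMem hz, hg,
        Set.indicator_of_notMem (by simpa [mem_ball_zero_iff] using hz)]
  rw [h1, integral_fun_norm_addHaar volume g]
  have hdim : Module.finrank ℝ ℂ = 2 := Complex.finrank_real_complex
  rw [hdim]
  have hvol : volume.real (ball (0:ℂ) 1) = Real.pi := by
    simp [Measure.real, Complex.volume_ball]
  rw [hvol]
  have h2 : ∫ y in Set.Ioi (0:ℝ), y ^ (2-1) • g y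
      = ∫ y in Set.Ioo (0:ℝ) R, y * ((1 - y ^ 2) ^ 2 / 4) := by
    rw [← Set.Ioi_inter_Iio, ← setIntegral_indicator measurableSet_Iio]
    congr 1; funext y
    by_cases hy : y ∈ Set.Iio R
    · rw [Set.indicator_of_mem hy, hg, pow_one, smul_eq_mul, Set.indicator_of_mem hy]
    · rw [Set.indicator_of_notMem hy, hg, pow_one, smul_eq_mul,
        Set.indicator_of_notMem hy, mul_zero]
  rw [h2]
  have h3 : ∫ y in Set.Ioo (0:ℝ) R, y * ((1 - y ^ 2) ^ 2 / 4)
      = (1 - (1 - R ^ 2) ^ 3) / 24 := by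
    rw [← integral_Ioc_eq_integral_Ioo, ← intervalIntegral.integral_of_le hR.le]
    have : ∀ y ∈ Set.uIcc (0:ℝ) R, HasDerivAt (fun y : ℝ => -(1 - y ^ 2) ^ 3 / 24)
        (y * ((1 - y ^ 2) ^ 2 / 4)) y := by
      intro y _
      have h1 : HasDerivAt (fun y : ℝ => 1 - y ^ 2) (-(2 * y ^ 1)) y := by
        simpa using (hasDerivAt_pow 2 y).const_sub 1
      have h2 := ((h1.pow 3).neg).div_const 24
      exact h2.congr_deriv (by push_cast; ring)
    rw [intervalIntegral.integral_eq_sub_of_hasDerivAt this (Continuous.intervalIntegrable (by continuity) 0 R)]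
    ring
  rw [h3]
  rw [nsmul_eq_mul, smul_eq_mul]
  push_cast
  ring

/-- If `q` is holomorphic on the unit disc with Taylor expansion
`q(z) = Σ_{n≥2} (n³ - n) aₙ z^{n-2}`, then for any `R ∈ (0,1)`,
`∫∫_{|z|<R} |q(z)|² (1-|z|²)²/4 d²z ≥ (4π/3) |3 a₂ / 2|² (1 - (1 - R²)³)`. -/
theorem stmt_5 (q : ℂ → ℂ) (a : ℕ → ℂ)
    (hq : ∀ z : ℂ, ‖z‖ < 1 →
      HasSum (fun n : ℕ => ((((n : ℂ) + 2) ^ 3 - ((n : ℂ) + 2)) * a (n + 2)) * z ^ n) (q z))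
    (R : ℝ) (hR : R ∈ Set.Ioo (0:ℝ) 1) :
    (4 * Real.pi / 3) * ‖3 * a 2 / 2‖ ^ 2 * (1 - (1 - R ^ 2) ^ 3) ≤
      ∫ z in Metric.ball (0:ℂ) R,
        ‖q z‖ ^ 2 * (1 - ‖z‖ ^ 2) ^ 2 / 4 := by
  obtain ⟨hR0, hR1⟩ := hR
  set c : ℕ → ℂ := fun n => (((n : ℂ) + 2) ^ 3 - ((n : ℂ) + 2)) * a (n + 2) with hc
  have hq1 : ∀ z : ℂ, ‖z‖ < 1 → HasSum (fun n => c n * z ^ n) (q z) := by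
    intro z hz
    exact hq z hz
  -- summability of coefficients against R^n
  obtain ⟨R0, hRR0, hR01⟩ := exists_between hR1
  have hR0pos : 0 < R0 := lt_trans hR0 hRR0
  have hs0 : Summable fun n => c n * (R0 : ℂ) ^ n :=
    (hq1 (R0 : ℂ) (by rw [Complex.norm_real, Real.norm_of_nonneg hR0pos.le]; exact hR01)).summable
  have hbdd : BddAbove (Set.range fun n => ‖c n * (R0:ℂ) ^ n‖) :=
    (hs0.tendsto_atTop_zero.norm).bddAbove_range
  obtain ⟨C, hC⟩ := hbdd
  have hCn : ∀ n, ‖c n‖ * R0 ^ n ≤ C := by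
    intro n
    have := hC (Set.mem_range_self (f := fun n => ‖c n * (R0:ℂ) ^ n‖) n)
    simpa [norm_mul, norm_pow, Complex.norm_real, abs_of_nonneg hR0pos.le] using this
  have hgeo : Summable fun n => ‖c n‖ * R ^ n := by
    have hlt : R / R0 < 1 := (div_lt_one hR0pos).2 hRR0
    refine Summable.of_nonneg_of_le (fun n => by positivity) (fun n => ?_)
      ((summable_geometric_of_lt_one (by positivity) hlt).mul_left C)
    have he : ‖c n‖ * R ^ n = (‖c n‖ * R0 ^ n) * (R / R0) ^ n := by
      rw [div_pow]; field_simp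
    rw [he]
    exact mul_le_mul_of_nonneg_right (hCn n) (by positivity)
  -- continuity of q on the closed ball
  have hcontq : ContinuousOn q (closedBall (0:ℂ) R) := by
    have hts : ContinuousOn (fun z : ℂ => ∑' n, c n * z ^ n) (closedBall (0:ℂ) R) := by
      refine continuousOn_tsum (fun n => Continuous.continuousOn (by continuity)) hgeo ?_
      intro n z hz
      rw [mem_closedBall_zero_iff] at hz
      calc ‖c n * z ^ n‖ = ‖c n‖ * ‖z‖ ^ n := by rw [norm_mul, norm_pow]
        _ ≤ ‖c n‖ * R ^ n := by gcongr
    refine hts.congr ?_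
    intro z hz
    rw [mem_closedBall_zero_iff] at hz
    exact ((hq1 z (lt_of_le_of_lt hz hR1)).tsum_eq).symm
  have hcw : Continuous fun z : ℂ => (sw z : ℂ) := Complex.continuous_ofReal.comp sw_cont
  have hIntn : ∀ n : ℕ, IntegrableOn (fun z => c n * z ^ n * (sw z : ℂ)) (ball (0:ℂ) R) := by
    intro n
    exact ((Continuous.continuousOn (by continuity)).integrableOn_compact
      (isCompact_closedBall _ _)).mono_set ball_subset_closedBall
  have hFnorm : ∀ n : ℕ, ∫ z in ball (0:ℂ) R, ‖c n * z ^ n * (sw z : ℂ)‖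
      ≤ (volume (ball (0:ℂ) R)).toReal * (‖c n‖ * R ^ n) := by
    intro n
    have hb : ∀ z ∈ ball (0:ℂ) R, ‖c n * z ^ n * (sw z : ℂ)‖ ≤ ‖c n‖ * R ^ n := by
      intro z hz
      rw [mem_ball_zero_iff] at hz
      have h1 : ‖z‖ ^ n ≤ R ^ n := pow_le_pow_left₀ (norm_nonneg z) hz.le n
      have h2 : ‖(sw z : ℂ)‖ ≤ 1 := by
        rw [Complex.norm_real, Real.norm_of_nonneg (sw_nonneg z)]
        linarith [sw_le (le_of_lt (hz.trans hR1))]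
      calc ‖c n * z ^ n * (sw z:ℂ)‖ = ‖c n‖ * ‖z‖ ^ n * ‖(sw z:ℂ)‖ := by
            rw [norm_mul, norm_mul, norm_pow]
        _ ≤ ‖c n‖ * R ^ n * 1 := by
            refine mul_le_mul (by gcongr) h2 (norm_nonneg _) (by positivity)
        _ = ‖c n‖ * R ^ n := mul_one _
    calc ∫ z in ball (0:ℂ) R, ‖c n * z ^ n * (sw z : ℂ)‖
        ≤ ∫ _z in ball (0:ℂ) R, (‖c n‖ * R ^ n) :=
          setIntegral_mono_on (hIntn n).norm
            (integrableOn_const measure_ball_lt_top.ne) measurableSet_ball hb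
      _ = (volume (ball (0:ℂ) R)).toReal * (‖c n‖ * R ^ n) := by
          rw [setIntegral_const, smul_eq_mul]; rfl
  have hFsum : Summable fun n => ∫ z in ball (0:ℂ) R, ‖c n * z ^ n * (sw z : ℂ)‖ :=
    Summable.of_nonneg_of_le
      (fun n => setIntegral_nonneg measurableSet_ball fun z _ => norm_nonneg _)
      hFnorm (hgeo.mul_left _)
  have hkey := hasSum_integral_of_summable_integral_norm
    (μ := volume.restrict (ball (0:ℂ) R))
    (F := fun n z => c n * z ^ n * (sw z : ℂ)) hIntn hFsum
  have htsum : ∫ z in ball (0:ℂ) R, (∑' n, c n * z ^ n * (sw z:ℂ))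
      = ∫ z in ball (0:ℂ) R, q z * (sw z:ℂ) := by
    refine setIntegral_congr_fun measurableSet_ball (fun z hz => ?_)
    rw [mem_ball_zero_iff] at hz
    exact ((hq1 z (hz.trans hR1)).mul_right ((sw z : ℂ))).tsum_eq
  rw [htsum] at hkey
  set B : ℝ := ∫ z in ball (0:ℂ) R, sw z with hBdef
  have hsingle : HasSum (fun n => ∫ z in ball (0:ℂ) R, c n * z ^ n * (sw z:ℂ))
      (c 0 * (B : ℂ)) := by
    have h0 : (∫ z in ball (0:ℂ) R, c 0 * z ^ 0 * (sw z:ℂ)) = c 0 * (B:ℂ) := by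
      simp_rw [pow_zero, mul_one]
      rw [integral_const_mul]
      congr 1
      exact integral_ofReal (𝕜 := ℂ)
    rw [← h0]
    refine hasSum_single 0 (fun n hn => ?_)
    have hz : ∀ z : ℂ, c n * z ^ n * (sw z:ℂ) = c n * (z ^ n * (sw z:ℂ)) := fun z => by ring
    simp_rw [hz]
    rw [integral_const_mul, rot_int R n hn, mul_zero]
  have hQW : ∫ z in ball (0:ℂ) R, q z * (sw z:ℂ) = c 0 * (B:ℂ) := hkey.unique hsingle
  have hBval : B = Real.pi / 12 * (1 - (1 - R ^ 2) ^ 3) := ball_int_sw hR0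
  have hT : 0 < 1 - (1 - R ^ 2) ^ 3 := by
    have h1 : (1 - R ^ 2) ^ 3 < 1 := by
      apply pow_lt_one₀ (by nlinarith) (by nlinarith) (by norm_num)
    linarith
  have hBpos : 0 < B := by
    rw [hBval]
    have := Real.pi_pos
    apply mul_pos (by positivity) hT
  -- Cauchy-Schwarz
  haveI : IsFiniteMeasure (volume.restrict (ball (0:ℂ) R)) :=
    ⟨by rw [Measure.restrict_apply_univ]; exact measure_ball_lt_top⟩
  obtain ⟨M, hM⟩ := (isCompact_closedBall (0:ℂ) R).exists_bound_of_continuousOn hcontq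
  have hM0 : 0 ≤ M := le_trans (norm_nonneg (q 0)) (hM 0 (mem_closedBall_self hR0.le))
  set f : ℂ → ℝ := fun z => ‖q z‖ * Real.sqrt (sw z) with hfdef
  set g : ℂ → ℝ := fun z => Real.sqrt (sw z) with hgdef
  have hsqrt1 : ∀ z ∈ ball (0:ℂ) R, Real.sqrt (sw z) ≤ 1 := by
    intro z hz
    rw [mem_ball_zero_iff] at hz
    have := sw_le (hz.trans hR1).le
    exact Real.sqrt_le_one.mpr (by linarith)
  have hfm : AEStronglyMeasurable f (volume.restrict (ball (0:ℂ) R)) :=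
    ((hcontq.norm.mul (Real.continuous_sqrt.comp sw_cont).continuousOn).mono
      ball_subset_closedBall).aestronglyMeasurable measurableSet_ball
  have hgm : AEStronglyMeasurable g (volume.restrict (ball (0:ℂ) R)) :=
    (Real.continuous_sqrt.comp sw_cont).aestronglyMeasurable
  have hfLp : MemLp f (ENNReal.ofReal 2) (volume.restrict (ball (0:ℂ) R)) := by
    refine MemLp.of_bound hfm M ?_
    filter_upwards [ae_restrict_mem measurableSet_ball] with z hz
    simp only [hfdef]
    rw [Real.norm_of_nonneg (by positivity)]
    calc ‖q z‖ * Real.sqrt (sw z) ≤ M * 1 :=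
          mul_le_mul (hM z (ball_subset_closedBall hz)) (hsqrt1 z hz)
            (Real.sqrt_nonneg _) hM0
      _ = M := mul_one M
  have hgLp : MemLp g (ENNReal.ofReal 2) (volume.restrict (ball (0:ℂ) R)) := by
    refine MemLp.of_bound hgm 1 ?_
    filter_upwards [ae_restrict_mem measurableSet_ball] with z hz
    simp only [hgdef]
    rw [Real.norm_of_nonneg (Real.sqrt_nonneg _)]
    exact hsqrt1 z hz
  have hpq : Real.HolderConjugate 2 2 := Real.HolderConjugate.two_two
  have hCS := integral_mul_le_Lp_mul_Lq_of_nonneg hpq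
    (Filter.Eventually.of_forall fun z => by simp only [hfdef]; positivity)
    (Filter.Eventually.of_forall fun z => Real.sqrt_nonneg _) hfLp hgLp
  set A : ℝ := ∫ z in ball (0:ℂ) R, ‖q z‖ ^ 2 * sw z with hAdef
  have hAnn : 0 ≤ A := setIntegral_nonneg measurableSet_ball fun z _ => mul_nonneg (by positivity) (sw_nonneg z)
  have hrpow2 : ∀ x : ℝ, x ^ (2:ℝ) = x ^ 2 := fun x => by
    rw [show (2:ℝ) = ((2:ℕ):ℝ) by norm_num, Real.rpow_natCast]
  have h5 : ‖c 0‖ * B ≤ Real.sqrt A * Real.sqrt B := by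
    calc ‖c 0‖ * B = ‖c 0 * (B:ℂ)‖ := by
          rw [norm_mul (c 0) ((B:ℝ):ℂ), Complex.norm_real, Real.norm_of_nonneg hBpos.le]
      _ = ‖∫ z in ball (0:ℂ) R, q z * (sw z:ℂ)‖ := by rw [hQW]
      _ ≤ ∫ z in ball (0:ℂ) R, ‖q z * (sw z:ℂ)‖ := norm_integral_le_integral_norm _
      _ = ∫ z in ball (0:ℂ) R, f z * g z := by
          refine setIntegral_congr_fun measurableSet_ball fun z _ => ?_
          simp only [hfdef, hgdef]
          rw [norm_mul (q z) ((sw z:ℝ):ℂ), Complex.norm_real, Real.norm_of_nonneg (sw_nonneg z),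
            mul_assoc, Real.mul_self_sqrt (sw_nonneg z)]
      _ ≤ (∫ z in ball (0:ℂ) R, f z ^ (2:ℝ)) ^ ((1:ℝ)/2)
            * (∫ z in ball (0:ℂ) R, g z ^ (2:ℝ)) ^ ((1:ℝ)/2) := hCS
      _ = Real.sqrt A * Real.sqrt B := by
          have hfA : (∫ z in ball (0:ℂ) R, f z ^ (2:ℝ)) = A := by
            refine setIntegral_congr_fun measurableSet_ball fun z _ => ?_
            simp only [hfdef]
            rw [hrpow2, mul_pow, Real.sq_sqrt (sw_nonneg z)]
          have hgB : (∫ z in ball (0:ℂ) R, g z ^ (2:ℝ)) = B := by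
            refine setIntegral_congr_fun measurableSet_ball fun z _ => ?_
            simp only [hgdef]
            rw [hrpow2, Real.sq_sqrt (sw_nonneg z)]
          rw [hfA, hgB, ← Real.sqrt_eq_rpow, ← Real.sqrt_eq_rpow]
  have h6 : ‖c 0‖ ^ 2 * B ≤ A := by
    have h7 : (‖c 0‖ * B) ^ 2 ≤ (Real.sqrt A * Real.sqrt B) ^ 2 :=
      pow_le_pow_left₀ (by positivity) h5 2
    rw [mul_pow, mul_pow, Real.sq_sqrt hAnn, Real.sq_sqrt hBpos.le] at h7
    exact le_of_mul_le_mul_right (by nlinarith [h7]) hBpos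
  have hgoalA : (∫ z in ball (0:ℂ) R,
      ‖q z‖ ^ 2 * (1 - ‖z‖ ^ 2) ^ 2 / 4) = A := by
    refine setIntegral_congr_fun measurableSet_ball fun z _ => ?_
    simp only [sw]
    ring
  rw [hgoalA]
  have hc0 : c 0 = 6 * a 2 := by
    rw [hc]; norm_num
  have hnormc0 : ‖c 0‖ = 6 * ‖a 2‖ := by
    rw [hc0, norm_mul]
    norm_num
  have habs : ‖3 * a 2 / 2‖ = 3 / 2 * ‖a 2‖ := by
    rw [norm_div, norm_mul]
    norm_num
    ring
  calc (4 * Real.pi / 3) * ‖3 * a 2 / 2‖ ^ 2 * (1 - (1 - R ^ 2) ^ 3)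
      = ‖c 0‖ ^ 2 * B := by rw [habs, hnormc0, hBval]; ring
    _ ≤ A := h6
end
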